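/- Let ρ : ℝ → ℝ be a positive twice differentiable solution of ρ'' + ω(t)²ρ = 0, and let x, y solve x'' = -ω(t)²x + F(y/x)/x³, y'' = -ω(t)²y + G(y/x)/y³. Define the new time T(t) = ∫₀ᵗ ρ(s)⁻²ds and set X = x/ρ, Y = y/ρ regarded as functions of T. Then X and Y satisfy the autonomous system d²X/dT² = F(Y/X)/X³ and d²Y/dT² = G(Y/X)/Y³. -/

import Mathlib

theorem ermakov_aux
    (ω ρ z z' ρ' Z fz : ℝ → ℝ) (T : ℝ → ℝ)
    (hρpos : ∀ t, 0 < ρ t)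
    (hρ : ∀ t, HasDerivAt ρ (ρ' t) t)
    (hρ' : ∀ t, HasDerivAt ρ' (-(ω t)^2 * ρ t) t)
    (hz : ∀ t, HasDerivAt z (z' t) t)
    (hz' : ∀ t, HasDerivAt z' (-(ω t)^2 * z t + fz t) t)
    (hT : ∀ t, T t = ∫ s in (0:ℝ)..t, ((ρ s)^2)⁻¹)
    (hZ : Differentiable ℝ Z) (hZ' : Differentiable ℝ (deriv Z))
    (hZT : ∀ t, Z (T t) = z t / ρ t) :
    ∀ t, deriv (deriv Z) (T t) = fz t * (ρ t)^3 := by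
  have hρne : ∀ t, ρ t ≠ 0 := fun t => (hρpos t).ne'
  have hρc : Continuous ρ := by
    have : Differentiable ℝ ρ := fun t => (hρ t).differentiableAt
    exact this.continuous
  have hcont : Continuous fun s => ((ρ s)^2)⁻¹ :=
    (hρc.pow 2).inv₀ (fun s => pow_ne_zero 2 (hρne s))
  have hTfun : T = fun u => ∫ s in (0:ℝ)..u, ((ρ s)^2)⁻¹ := funext hT
  have hTd : ∀ t, HasDerivAt T (((ρ t)^2)⁻¹) t := by
    intro t
    rw [hTfun]
    exact (hcont.integral_hasStrictDerivAt 0 t).hasDerivAt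
  -- first derivative
  have step1 : ∀ t, deriv Z (T t) = z' t * ρ t - z t * ρ' t := by
    intro t
    have hcomp : HasDerivAt (fun s => Z (T s)) (deriv Z (T t) * ((ρ t)^2)⁻¹) t :=
      (hZ (T t)).hasDerivAt.comp t (hTd t)
    have hquot : HasDerivAt (fun s => z s / ρ s)
        ((z' t * ρ t - z t * ρ' t) / (ρ t)^2) t := (hz t).div (hρ t) (hρne t)
    have heq : (fun s => z s / ρ s) = fun s => Z (T s) := funext fun s => (hZT s).symm
    rw [heq] at hquot
    have := hcomp.unique hquot
    field_simp [pow_ne_zero 2 (hρne t)] at this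
    rw [div_left_inj' (pow_ne_zero 2 (hρne t))] at this; linarith
  -- second derivative
  intro t
  have hcomp : HasDerivAt (fun s => deriv Z (T s))
      (deriv (deriv Z) (T t) * ((ρ t)^2)⁻¹) t :=
    (hZ' (T t)).hasDerivAt.comp t (hTd t)
  have hrhs : HasDerivAt (fun s => z' s * ρ s - z s * ρ' s)
      ((-(ω t)^2 * z t + fz t) * ρ t + z' t * ρ' t
        - (z' t * ρ' t + z t * (-(ω t)^2 * ρ t))) t :=
    ((hz' t).mul (hρ t)).sub ((hz t).mul (hρ' t))
  have heq : (fun s => z' s * ρ s - z s * ρ' s) = fun s => deriv Z (T s) :=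
    funext fun s => (step1 s).symm
  rw [heq] at hrhs
  have h2 := hcomp.unique hrhs
  have hρ2 : ((ρ t)^2) ≠ 0 := pow_ne_zero 2 (hρne t)
  field_simp [pow_ne_zero 2 (hρne t)] at h2
  ring_nf at h2 ⊢
  rw [inv_pow, ← div_eq_mul_inv, div_eq_iff hρ2] at h2; rw [h2]; ring

/-- The substitution T = ∫ρ⁻²dt, X = x/ρ, Y = y/ρ turns the time-dependent
generalized Ermakov system into the autonomous one. -/
theorem ermakov_autonomous_form
    (ω F G ρ x y x' y' ρ' X Y : ℝ → ℝ) (T : ℝ → ℝ)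
    (hρpos : ∀ t, 0 < ρ t)
    (hρ : ∀ t, HasDerivAt ρ (ρ' t) t)
    (hρ' : ∀ t, HasDerivAt ρ' (-(ω t)^2 * ρ t) t)
    (hx0 : ∀ t, x t ≠ 0) (hy0 : ∀ t, y t ≠ 0)
    (hx : ∀ t, HasDerivAt x (x' t) t)
    (hy : ∀ t, HasDerivAt y (y' t) t)
    (hx' : ∀ t, HasDerivAt x' (-(ω t)^2 * x t + F (y t / x t) / (x t)^3) t)
    (hy' : ∀ t, HasDerivAt y' (-(ω t)^2 * y t + G (y t / x t) / (y t)^3) t)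
    (hT : ∀ t, T t = ∫ s in (0:ℝ)..t, ((ρ s)^2)⁻¹)
    (hX : Differentiable ℝ X) (hX' : Differentiable ℝ (deriv X))
    (hY : Differentiable ℝ Y) (hY' : Differentiable ℝ (deriv Y))
    (hXT : ∀ t, X (T t) = x t / ρ t)
    (hYT : ∀ t, Y (T t) = y t / ρ t) :
    ∀ t, deriv (deriv X) (T t) = F (Y (T t) / X (T t)) / (X (T t))^3 ∧
      deriv (deriv Y) (T t) = G (Y (T t) / X (T t)) / (Y (T t))^3 := by
  intro t
  have hρne : ρ t ≠ 0 := (hρpos t).ne'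
  have hratio : Y (T t) / X (T t) = y t / x t := by
    rw [hXT, hYT]
    field_simp
  have hXeq := ermakov_aux ω ρ x x' ρ' X (fun s => F (y s / x s) / (x s)^3) T
    hρpos hρ hρ' hx hx' hT hX hX' hXT t
  have hYeq := ermakov_aux ω ρ y y' ρ' Y (fun s => G (y s / x s) / (y s)^3) T
    hρpos hρ hρ' hy hy' hT hY hY' hYT t
  constructor
  · rw [hXeq, hratio, hXT]
    field_simp
  · rw [hYeq, hratio, hYT]
    field_simp
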